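/- Bound on the Darcy-defect function Q (equation (3.30)): Under the ODE hypotheses, define Q(t) = (1+t)^{−λ} θ(t)^{nγ−n+2} − (1+t). Then there exists C = C(κ,λ) > 0 such that for all t ≥ 0: |Q(t)| ≤ C ln(1+t) if λ = 0, and |Q(t)| ≤ C (1+t)^λ if λ ∈ (0,1). -/

import Mathlib

open Real

noncomputable section

/-- If F has nonnegative derivative on `[0,∞)`, then `F 0 ≤ F t` for `t ≥ 0`. -/
lemma mono_aux {F F' : ℝ → ℝ}
    (hd : ∀ t : ℝ, 0 ≤ t → HasDerivAt F (F' t) t)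
    (hnn : ∀ t : ℝ, 0 ≤ t → 0 ≤ F' t) {t : ℝ} (ht : 0 ≤ t) : F 0 ≤ F t := by
  have hmono : MonotoneOn F (Set.Ici 0) := by
    apply monotoneOn_of_deriv_nonneg (convex_Ici 0)
    · exact fun x hx => (hd x hx).continuousAt.continuousWithinAt
    · intro x hx
      rw [interior_Ici] at hx
      exact (hd x (le_of_lt hx)).differentiableAt.differentiableWithinAt
    · intro x hx
      rw [interior_Ici] at hx
      rw [(hd x (le_of_lt hx)).deriv]
      exact hnn x (le_of_lt hx)
  exact hmono (by exact Set.self_mem_Ici : (0:ℝ) ∈ Set.Ici 0) ht ht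

/-- Comparison: if `|F'| ≤ G'` on `[0,∞)` then `|F t - F 0| ≤ G t - G 0`. -/
lemma abs_comp_aux {F F' G G' : ℝ → ℝ}
    (hdF : ∀ t : ℝ, 0 ≤ t → HasDerivAt F (F' t) t)
    (hdG : ∀ t : ℝ, 0 ≤ t → HasDerivAt G (G' t) t)
    (hb : ∀ t : ℝ, 0 ≤ t → |F' t| ≤ G' t) {t : ℝ} (ht : 0 ≤ t) :
    |F t - F 0| ≤ G t - G 0 := by
  have h1 : (G - F) 0 ≤ (G - F) t := by
    refine mono_aux (F' := fun s => G' s - F' s) (fun s hs => (hdG s hs).sub (hdF s hs))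
      (fun s hs => ?_) ht
    have := abs_le.mp (hb s hs); show 0 ≤ G' s - F' s; linarith [this.2]
  have h2 : (G + F) 0 ≤ (G + F) t := by
    refine mono_aux (F' := fun s => G' s + F' s) (fun s hs => (hdG s hs).add (hdF s hs))
      (fun s hs => ?_) ht
    have := abs_le.mp (hb s hs); show 0 ≤ G' s + F' s; linarith [this.1]
  simp only [Pi.sub_apply, Pi.add_apply] at h1 h2
  rw [abs_le]; constructor <;> linarith

/-- derivative of `(1+t)^p`. -/
lemma hasDerivAt_one_add_rpow (p t : ℝ) (ht : (0:ℝ) ≤ t) :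
    HasDerivAt (fun s : ℝ => (1 + s) ^ p) (p * (1 + t) ^ (p - 1)) t := by
  have h1 : HasDerivAt (fun s : ℝ => 1 + s) 1 t := (hasDerivAt_id t).const_add 1
  have h2 := h1.rpow_const (p := p) (Or.inl (by linarith : (1:ℝ) + t ≠ 0))
  simpa using h2


/-- κ = (1+λ)/(nγ−n+2) -/
def kpp (n : ℕ) (γ lam : ℝ) : ℝ := (1 + lam) / ((n : ℝ) * γ - (n : ℝ) + 2)

/-- the hypotheses on the corrected scale factor θ = ν + h. -/
def ThetaODE (n : ℕ) (γ lam : ℝ) (θ : ℝ → ℝ) : Prop :=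
  ContDiff ℝ 2 θ ∧ (∀ t : ℝ, 0 ≤ t → 0 < θ t) ∧ θ 0 = 1 ∧ deriv θ 0 = kpp n γ lam ∧
    ∀ t : ℝ, 0 ≤ t →
      deriv (deriv θ) t + (1 + t) ^ (-lam) * deriv θ t
        = kpp n γ lam * θ t ^ ((n : ℝ) - (n : ℝ) * γ - 1)

/-- the Darcy-defect function Q(t) = (1+t)^{−λ} θ(t)^{nγ−n+2} − (1+t). -/
def Qfun (n : ℕ) (γ lam : ℝ) (θ : ℝ → ℝ) (t : ℝ) : ℝ :=
  (1 + t) ^ (-lam) * θ t ^ ((n : ℝ) * γ - (n : ℝ) + 2) - (1 + t)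

set_option maxHeartbeats 4000000 in
/-- **Equation (3.30)** (bound on the Darcy-defect function): there is C = C(κ,λ) > 0
with |Q(t)| ≤ C ln(1+t) if λ = 0 and |Q(t)| ≤ C (1+t)^λ if λ ∈ (0,1), for all t ≥ 0. -/
theorem darcy_defect_bound
    (n : ℕ) (hn : n = 2 ∨ n = 3) (γ lam : ℝ)
    (hγ : 1 < γ) (hlam0 : 0 ≤ lam) (hlam1 : lam < 1)
    (θ : ℝ → ℝ) (hθ : ThetaODE n γ lam θ) :
    ∃ C : ℝ, 0 < C ∧ ∀ t : ℝ, 0 ≤ t →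
      ((lam = 0 → |Qfun n γ lam θ t| ≤ C * Real.log (1 + t)) ∧
       (0 < lam → |Qfun n γ lam θ t| ≤ C * (1 + t) ^ lam)) := by
  obtain ⟨hC2, hpos, hθ0, hD0, hODE⟩ := hθ
  obtain ⟨m, hm_def⟩ : ∃ m : ℝ, m = (n : ℝ) * γ - (n : ℝ) + 2 := ⟨_, rfl⟩
  have hm : 2 < m := by
    rcases hn with h | h <;> subst h <;> (rw [hm_def]; push_cast; nlinarith)
  obtain ⟨κ, hκ_def⟩ : ∃ κ : ℝ, κ = kpp n γ lam := ⟨_, rfl⟩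
  have hκm : κ = (1 + lam) / m := by rw [hκ_def, kpp, ← hm_def]
  have hκpos : 0 < κ := by rw [hκm]; apply div_pos <;> linarith
  have hκ1 : κ < 1 := by rw [hκm, div_lt_one (by linarith)]; linarith
  have hmκ : m * κ = 1 + lam := by rw [hκm]; field_simp
  rw [← hκ_def] at hD0
  -- derivatives of θ
  have hd1 : ∀ t : ℝ, HasDerivAt θ (deriv θ t) t :=
    fun t => ((hC2.differentiable two_ne_zero) t).hasDerivAt
  have hd2 : ∀ t : ℝ, HasDerivAt (deriv θ) (deriv (deriv θ) t) t := by
    have h2 : ContDiff ℝ ((1 : WithTop ℕ∞) + 1) θ := by norm_num; exact hC2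
    have := (contDiff_succ_iff_deriv.mp h2).2.2
    exact fun t => (this.differentiable one_ne_zero t).hasDerivAt
  have hθne : ∀ t : ℝ, 0 ≤ t → θ t ≠ 0 := fun t ht => ne_of_gt (hpos t ht)
  have he : (n : ℝ) - (n : ℝ) * γ - 1 = 1 - m := by rw [hm_def]; ring
  have hODE2 : ∀ t : ℝ, 0 ≤ t →
      deriv (deriv θ) t = κ * θ t ^ (1 - m) - (1 + t) ^ (-lam) * deriv θ t := by
    intro t ht
    have h := hODE t ht
    rw [he, ← hκ_def] at h
    linarith
  have h1t : ∀ t : ℝ, 0 ≤ t → (0:ℝ) < 1 + t := fun t ht => by linarith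
  have hone_le : ∀ t : ℝ, 0 ≤ t → (1:ℝ) ≤ 1 + t := fun t ht => by linarith
  have hy_le_one : ∀ (p : ℝ), p ≤ 0 → ∀ t : ℝ, 0 ≤ t → (1 + t) ^ p ≤ 1 :=
    fun p hp t ht => Real.rpow_le_one_of_one_le_of_nonpos (hone_le t ht) hp
  have hy_pos : ∀ (p : ℝ) (t : ℝ), 0 ≤ t → (0:ℝ) < (1 + t) ^ p :=
    fun p t ht => rpow_pos_of_pos (h1t t ht) p
  have hrpow : ∀ (p : ℝ) (t : ℝ), 0 ≤ t →
      HasDerivAt (fun s => θ s ^ p) (deriv θ t * p * θ t ^ (p - 1)) t :=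
    fun p t ht => (hd1 t).rpow_const (Or.inl (hθne t ht))
  -- integrating factor E
  obtain ⟨E, hE_def⟩ : ∃ E : ℝ → ℝ,
      E = fun t => Real.exp (((1 + t) ^ (1 - lam) - 1) / (1 - lam)) := ⟨_, rfl⟩
  have hEpos : ∀ t : ℝ, 0 < E t := fun t => by rw [hE_def]; exact Real.exp_pos _
  have hE0 : E 0 = 1 := by rw [hE_def]; simp
  have hEd : ∀ t : ℝ, 0 ≤ t → HasDerivAt E ((1 + t) ^ (-lam) * E t) t := by
    intro t ht
    have hne : (1 : ℝ) - lam ≠ 0 := by linarith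
    have hB := ((hasDerivAt_one_add_rpow (1 - lam) t ht).sub_const 1).div_const (1 - lam)
    have hB' : HasDerivAt (fun s : ℝ => ((1 + s) ^ (1 - lam) - 1) / (1 - lam))
        ((1 + t) ^ (-lam)) t := by
      refine HasDerivAt.congr_deriv hB (Eq.symm ?_)
      rw [show (1 : ℝ) - lam - 1 = -lam by ring]
      field_simp
    rw [hE_def]
    simpa [mul_comm] using hB'.exp
  -- F1 : positivity of θ'
  have hG1d : ∀ t : ℝ, 0 ≤ t →
      HasDerivAt (fun s => E s * deriv θ s) (E t * (κ * θ t ^ (1 - m))) t := by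
    intro t ht
    have h := (hEd t ht).mul (hd2 t)
    refine HasDerivAt.congr_deriv h (Eq.symm ?_)
    rw [hODE2 t ht]; ring
  have hED_lb : ∀ t : ℝ, 0 ≤ t → κ ≤ E t * deriv θ t := by
    intro t ht
    have h := mono_aux (F := fun s => E s * deriv θ s)
      (F' := fun s => E s * (κ * θ s ^ (1 - m))) hG1d
      (fun s hs => by
        have h1 := hEpos s
        have h2 := rpow_pos_of_pos (hpos s hs) (1 - m)
        show (0:ℝ) ≤ E s * (κ * θ s ^ (1 - m))
        positivity) ht
    simpa [hE0, hD0] using h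
  have hDpos : ∀ t : ℝ, 0 ≤ t → 0 < deriv θ t := by
    intro t ht
    have h := hED_lb t ht
    nlinarith [hEpos t]
  -- u and f
  obtain ⟨u, hu_def⟩ : ∃ u : ℝ → ℝ, u = fun t => θ t ^ (m - 1) * deriv θ t := ⟨_, rfl⟩
  obtain ⟨f, hf_def⟩ : ∃ f : ℝ → ℝ,
      f = fun t => (m - 1) * θ t ^ (m - 2) * (deriv θ t) ^ 2 := ⟨_, rfl⟩
  have hf_nn : ∀ t : ℝ, 0 ≤ t → 0 ≤ f t := by
    intro t ht
    have h1 := rpow_pos_of_pos (hpos t ht) (m - 2)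
    rw [hf_def]
    exact mul_nonneg (mul_nonneg (by linarith) h1.le) (sq_nonneg _)
  have hu0 : u 0 = κ := by rw [hu_def]; simp [hθ0, hD0]
  have hud : ∀ t : ℝ, 0 ≤ t →
      HasDerivAt u (f t + κ - (1 + t) ^ (-lam) * u t) t := by
    intro t ht
    have h := (hrpow (m - 1) t ht).mul (hd2 t)
    rw [hu_def, hf_def]
    refine HasDerivAt.congr_deriv h (Eq.symm ?_)
    rw [hODE2 t ht]
    have hmm : θ t ^ (m - 1) * θ t ^ (1 - m) = 1 := by
      rw [← Real.rpow_add (hpos t ht)]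
      norm_num
    rw [show m - 1 - 1 = m - 2 by ring]
    linear_combination (-κ) * hmm
  have hEud : ∀ t : ℝ, 0 ≤ t →
      HasDerivAt (fun s => E s * u s) (E t * (f t + κ)) t := by
    intro t ht
    have h := (hEd t ht).mul (hud t ht)
    refine HasDerivAt.congr_deriv h (Eq.symm ?_)
    ring
  -- derivative of (1+t)^p * E t
  have hkEd : ∀ (p : ℝ) (t : ℝ), 0 ≤ t → HasDerivAt (fun s => (1 + s) ^ p * E s)
      (E t * (p * (1 + t) ^ (p - 1) + (1 + t) ^ (p - lam))) t := by
    intro p t ht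
    have h := (hasDerivAt_one_add_rpow p t ht).mul (hEd t ht)
    refine HasDerivAt.congr_deriv h (Eq.symm ?_)
    have hprod : (1 + t) ^ p * (1 + t) ^ (-lam) = (1 + t) ^ (p - lam) := by
      rw [sub_eq_add_neg, Real.rpow_add (h1t t ht)]
    linear_combination (-(E t)) * hprod
  -- F3 : u ≥ (1/m)(1+t)^lam
  have hu_lb : ∀ t : ℝ, 0 ≤ t → (1 / m) * (1 + t) ^ lam ≤ u t := by
    intro t ht
    have key : ∀ s : ℝ, 0 ≤ s →
        0 ≤ E s * (f s + κ) - (1/m) * (E s * (lam * (1 + s) ^ (lam - 1) + (1 + s) ^ (lam - lam))) := by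
      intro s hs
      have hy1 : (1 + s) ^ (lam - 1) ≤ 1 := hy_le_one (lam - 1) (by linarith) s hs
      have hy0 : 0 ≤ (1 + s) ^ (lam - 1) := le_of_lt (hy_pos _ s hs)
      have hy2 : (1 + s) ^ (lam - lam) = 1 := by
        rw [show lam - lam = (0:ℝ) by ring, Real.rpow_zero]
      have h4 : (1/m) * (lam * (1 + s) ^ (lam - 1) + 1) ≤ κ := by
        have h41 : lam * (1 + s) ^ (lam - 1) ≤ lam := by nlinarith
        have h42 : (1/m) * (lam * (1 + s) ^ (lam - 1) + 1) ≤ (1/m) * (lam + 1) := by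
          apply mul_le_mul_of_nonneg_left (by linarith)
          positivity
        have h43 : (1/m) * (lam + 1) = κ := by rw [hκm]; ring
        linarith
      rw [hy2]
      have h5 : E s * ((1/m) * (lam * (1 + s) ^ (lam - 1) + 1)) ≤ E s * κ :=
        mul_le_mul_of_nonneg_left h4 (le_of_lt (hEpos s))
      have h6 : 0 ≤ E s * f s := mul_nonneg (le_of_lt (hEpos s)) (hf_nn s hs)
      nlinarith [h5, h6]
    have h := mono_aux (F := fun s => E s * u s - (1/m) * ((1 + s) ^ lam * E s))
      (F' := fun s => E s * (f s + κ) - (1/m) * (E s * (lam * (1 + s) ^ (lam - 1) + (1 + s) ^ (lam - lam))))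
      (fun s hs => (hEud s hs).sub ((hkEd lam s hs).const_mul (1/m)))
      key ht
    simp only [hE0, hu0, add_zero, mul_one, one_mul, Real.one_rpow] at h
    have hEt := hEpos t
    have hlam_m : (1:ℝ)/m ≤ κ := by
      rw [hκm, div_le_div_iff₀ (by linarith) (by linarith)]; nlinarith
    by_contra hcon
    push_neg at hcon
    have h7 : E t * u t < E t * ((1/m) * (1 + t) ^ lam) :=
      mul_lt_mul_of_pos_left hcon hEt
    nlinarith [h7, h]
  -- F4 : θ^m lower bound
  have hPd : ∀ t : ℝ, 0 ≤ t → HasDerivAt (fun s => θ s ^ m) (m * u t) t := by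
    intro t ht
    have h := hrpow m t ht
    refine HasDerivAt.congr_deriv h (Eq.symm ?_)
    rw [hu_def]
    ring
  have hP0 : θ 0 ^ m = 1 := by rw [hθ0, Real.one_rpow]
  have hPlb : ∀ t : ℝ, 0 ≤ t → (1 + t) ^ (1 + lam) / 2 ≤ θ t ^ m := by
    intro t ht
    have hdG : ∀ s : ℝ, 0 ≤ s → HasDerivAt
        (fun r => 1 + ((1 + r) ^ (1 + lam) - 1) / (1 + lam)) ((1 + s) ^ lam) s := by
      intro s hs
      have h := (((hasDerivAt_one_add_rpow (1 + lam) s hs).sub_const 1).div_const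
        (1 + lam)).const_add 1
      refine HasDerivAt.congr_deriv h (Eq.symm ?_)
      rw [show (1:ℝ) + lam - 1 = lam by ring]
      field_simp
    have h := mono_aux
      (F := fun s => θ s ^ m - (1 + ((1 + s) ^ (1 + lam) - 1) / (1 + lam)))
      (F' := fun s => m * u s - (1 + s) ^ lam)
      (fun s hs => (hPd s hs).sub (hdG s hs))
      (fun s hs => by
        have h1 := hu_lb s hs
        have h2 : (1 + s) ^ lam ≤ m * u s := by
          have h3 := mul_le_mul_of_nonneg_left h1 (by linarith : (0:ℝ) ≤ m)
          calc (1 + s) ^ lam = m * ((1/m) * (1 + s) ^ lam) := by field_simp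
          _ ≤ m * u s := h3
        show (0:ℝ) ≤ m * u s - (1 + s) ^ lam
        linarith) ht
    simp only [hP0, add_zero, Real.one_rpow, sub_self, zero_div] at h
    have hX : (1:ℝ) ≤ (1 + t) ^ (1 + lam) :=
      Real.one_le_rpow (hone_le t ht) (by linarith)
    have hkey : (1 + t) ^ (1 + lam) / 2 ≤ 1 + ((1 + t) ^ (1 + lam) - 1) / (1 + lam) := by
      have e : 1 + ((1 + t) ^ (1 + lam) - 1) / (1 + lam) - (1 + t) ^ (1 + lam) / 2
          = (2 * lam + (1 + t) ^ (1 + lam) * (1 - lam)) / (2 * (1 + lam)) := by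
        field_simp
        ring
      have h9 : 0 ≤ (2 * lam + (1 + t) ^ (1 + lam) * (1 - lam)) / (2 * (1 + lam)) := by
        apply div_nonneg _ (by linarith)
        nlinarith [hX]
      linarith [e, h9]
    linarith [hkey, h]
  -- θ^{1-m} upper bound
  have hθinv : ∀ t : ℝ, 0 ≤ t → θ t ^ (1 - m) ≤ 2 * (1 + t) ^ (κ - 1 - lam) := by
    have hr0 : 0 < (m - 1) / m := div_pos (by linarith) (by linarith)
    have hr1 : (m - 1) / m ≤ 1 := by rw [div_le_one (by linarith)]; linarith
    intro t ht
    have hXpos := hy_pos (1 + lam) t ht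
    have hbase_nn : (0:ℝ) ≤ (1 + t) ^ (1 + lam) / 2 := by positivity
    have h1 : ((1 + t) ^ (1 + lam) / 2) ^ ((m - 1) / m) ≤ (θ t ^ m) ^ ((m - 1) / m) :=
      Real.rpow_le_rpow hbase_nn (hPlb t ht) (le_of_lt hr0)
    have h2 : (θ t ^ m) ^ ((m - 1) / m) = θ t ^ (m - 1) := by
      rw [← Real.rpow_mul (le_of_lt (hpos t ht))]
      congr 1
      field_simp
    have h3 : ((1 + t) ^ (1 + lam) / 2) ^ ((m - 1) / m)
        = (1 + t) ^ (1 + lam - κ) / 2 ^ ((m - 1) / m) := by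
      rw [Real.div_rpow (le_of_lt hXpos) (by norm_num : (0:ℝ) ≤ 2),
        ← Real.rpow_mul (le_of_lt (h1t t ht))]
      congr 2
      rw [hκm]
      field_simp
    have h4 : (2:ℝ) ^ ((m - 1) / m) ≤ 2 := by
      calc (2:ℝ) ^ ((m - 1) / m) ≤ 2 ^ (1:ℝ) :=
        Real.rpow_le_rpow_of_exponent_le one_le_two hr1
      _ = 2 := Real.rpow_one 2
    have h2pos : (0:ℝ) < (2:ℝ) ^ ((m - 1) / m) := by positivity
    have h5 : (1 + t) ^ (1 + lam - κ) / 2 ≤ θ t ^ (m - 1) := by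
      rw [h2, h3] at h1
      have h6 : (1 + t) ^ (1 + lam - κ) / 2 ≤ (1 + t) ^ (1 + lam - κ) / 2 ^ ((m - 1) / m) := by
        rw [div_le_div_iff₀ (by norm_num) h2pos]
        exact mul_le_mul_of_nonneg_left h4 (le_of_lt (hy_pos _ t ht))
      linarith
    have hpos1 : (0:ℝ) < (1 + t) ^ (1 + lam - κ) / 2 := by
      have := hy_pos (1 + lam - κ) t ht; positivity
    have h7 : (θ t ^ (m - 1))⁻¹ ≤ ((1 + t) ^ (1 + lam - κ) / 2)⁻¹ :=
      inv_anti₀ hpos1 h5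
    have h8 : ((1 + t) ^ (1 + lam - κ) / 2)⁻¹ = 2 * (1 + t) ^ (κ - 1 - lam) := by
      rw [show κ - 1 - lam = -(1 + lam - κ) by ring,
        Real.rpow_neg (le_of_lt (h1t t ht))]
      have hne := (hy_pos (1 + lam - κ) t ht).ne'
      field_simp
    rw [show (1:ℝ) - m = -(m - 1) by ring, Real.rpow_neg (le_of_lt (hpos t ht))]
    rw [h8] at h7
    exact h7
  -- F5 : upper bound for θ'
  have hDub : ∀ t : ℝ, 0 ≤ t → deriv θ t ≤ 2 * (1 + t) ^ (κ - 1) := by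
    intro t ht
    have key : ∀ s : ℝ, 0 ≤ s → 0 ≤ 2 * (E s * ((κ - 1) * (1 + s) ^ (κ - 1 - 1)
        + (1 + s) ^ (κ - 1 - lam))) - E s * (κ * θ s ^ (1 - m)) := by
      intro s hs
      have hy12 : (1 + s) ^ (κ - 1 - 1) ≤ (1 + s) ^ (κ - 1 - lam) :=
        Real.rpow_le_rpow_of_exponent_le (hone_le s hs) (by linarith)
      have hinv := hθinv s hs
      have hEs := hEpos s
      have h1 : E s * (κ * θ s ^ (1 - m)) ≤ E s * (κ * (2 * (1 + s) ^ (κ - 1 - lam))) := by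
        apply mul_le_mul_of_nonneg_left _ (le_of_lt hEs)
        exact mul_le_mul_of_nonneg_left hinv (le_of_lt hκpos)
      have h2 : 0 ≤ (1 - κ) * ((1 + s) ^ (κ - 1 - lam) - (1 + s) ^ (κ - 1 - 1)) :=
        mul_nonneg (by linarith) (by linarith)
      nlinarith [mul_nonneg (le_of_lt hEs) h2]
    have h := mono_aux
      (F := fun s => 2 * ((1 + s) ^ (κ - 1) * E s) - E s * deriv θ s)
      (F' := fun s => 2 * (E s * ((κ - 1) * (1 + s) ^ (κ - 1 - 1) + (1 + s) ^ (κ - 1 - lam)))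
        - E s * (κ * θ s ^ (1 - m)))
      (fun s hs => ((hkEd (κ - 1) s hs).const_mul 2).sub (hG1d s hs))
      key ht
    simp only [hE0, hD0, add_zero, mul_one, one_mul, Real.one_rpow] at h
    have hEt := hEpos t
    by_contra hcon
    push_neg at hcon
    have h7 : E t * (2 * (1 + t) ^ (κ - 1)) < E t * deriv θ t :=
      mul_lt_mul_of_pos_left hcon hEt
    nlinarith [h7, h, hκ1]
  -- F6 : θ upper bound
  have hθub : ∀ t : ℝ, 0 ≤ t → θ t ≤ (1 + 2 / κ) * (1 + t) ^ κ := by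
    intro t ht
    have hκne := ne_of_gt hκpos
    have hdG : ∀ s : ℝ, 0 ≤ s → HasDerivAt
        (fun r => 1 + (2 / κ) * ((1 + r) ^ κ - 1)) (2 * (1 + s) ^ (κ - 1)) s := by
      intro s hs
      have h := (((hasDerivAt_one_add_rpow κ s hs).sub_const 1).const_mul (2 / κ)).const_add 1
      refine HasDerivAt.congr_deriv h (Eq.symm ?_)
      field_simp
    have h := mono_aux
      (F := fun s => (1 + (2 / κ) * ((1 + s) ^ κ - 1)) - θ s)
      (F' := fun s => 2 * (1 + s) ^ (κ - 1) - deriv θ s)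
      (fun s hs => (hdG s hs).sub (hd1 s))
      (fun s hs => by
        have := hDub s hs
        show (0:ℝ) ≤ 2 * (1 + s) ^ (κ - 1) - deriv θ s
        linarith) ht
    simp only [hθ0, add_zero, Real.one_rpow, sub_self, mul_zero] at h
    have hX : (1:ℝ) ≤ (1 + t) ^ κ := Real.one_le_rpow (hone_le t ht) (le_of_lt hκpos)
    have hc : (0:ℝ) < 2 / κ := by positivity
    nlinarith [h, hX, hc]
  -- F7 : bound on f
  have hf_ub : ∀ t : ℝ, 0 ≤ t →
      f t ≤ (4 * (m - 1) * (1 + 2 / κ) ^ (m - 2)) * (1 + t) ^ (lam - 1) := by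
    intro t ht
    have hC4 : (0:ℝ) < 1 + 2 / κ := by positivity
    have hθp : θ t ^ (m - 2) ≤ (1 + 2 / κ) ^ (m - 2) * (1 + t) ^ (κ * (m - 2)) := by
      have h1 : θ t ^ (m - 2) ≤ ((1 + 2 / κ) * (1 + t) ^ κ) ^ (m - 2) :=
        Real.rpow_le_rpow (le_of_lt (hpos t ht)) (hθub t ht) (by linarith)
      rwa [Real.mul_rpow (le_of_lt hC4) (le_of_lt (hy_pos κ t ht)),
        ← Real.rpow_mul (le_of_lt (h1t t ht))] at h1
    have hD2 : (deriv θ t) ^ 2 ≤ 4 * (1 + t) ^ (2 * κ - 2) := by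
      have h1 : (deriv θ t) ^ 2 ≤ (2 * (1 + t) ^ (κ - 1)) ^ 2 :=
        pow_le_pow_left₀ (le_of_lt (hDpos t ht)) (hDub t ht) 2
      have e : (1 + t) ^ (2 * κ - 2) = (1 + t) ^ (κ - 1) * (1 + t) ^ (κ - 1) := by
        rw [show 2 * κ - 2 = (κ - 1) + (κ - 1) by ring, Real.rpow_add (h1t t ht)]
      have h2 : (2 * (1 + t) ^ (κ - 1)) ^ 2 = 4 * (1 + t) ^ (2 * κ - 2) := by
        rw [e]; ring
      linarith
    have hcomb : θ t ^ (m - 2) * (deriv θ t) ^ 2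
        ≤ ((1 + 2 / κ) ^ (m - 2) * (1 + t) ^ (κ * (m - 2))) * (4 * (1 + t) ^ (2 * κ - 2)) := by
      apply mul_le_mul hθp hD2 (sq_nonneg _)
      positivity
    have hexp : (1 + t) ^ (κ * (m - 2)) * (1 + t) ^ (2 * κ - 2) = (1 + t) ^ (lam - 1) := by
      rw [← Real.rpow_add (h1t t ht)]
      congr 1
      linear_combination hmκ
    simp only [hf_def]
    calc (m - 1) * θ t ^ (m - 2) * (deriv θ t) ^ 2
        ≤ (m - 1) * (((1 + 2 / κ) ^ (m - 2) * (1 + t) ^ (κ * (m - 2))) * (4 * (1 + t) ^ (2 * κ - 2))) := by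
          rw [mul_assoc]
          exact mul_le_mul_of_nonneg_left hcomb (by linarith)
      _ = (4 * (m - 1) * (1 + 2 / κ) ^ (m - 2)) * ((1 + t) ^ (κ * (m - 2)) * (1 + t) ^ (2 * κ - 2)) := by
          ring
      _ = (4 * (m - 1) * (1 + 2 / κ) ^ (m - 2)) * (1 + t) ^ (lam - 1) := by rw [hexp]
  -- constants
  obtain ⟨C₅, hC5_def⟩ : ∃ C : ℝ, C = 4 * (m - 1) * (1 + 2 / κ) ^ (m - 2) := ⟨_, rfl⟩
  have hC5nn : 0 ≤ C₅ := by
    rw [hC5_def]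
    have h1 : (0:ℝ) < (1 + 2 / κ) ^ (m - 2) := by positivity
    nlinarith [h1]
  rw [← hC5_def] at hf_ub
  obtain ⟨C₆, hC6_def⟩ : ∃ C : ℝ, C = C₅ + 1 := ⟨_, rfl⟩
  have hC6pos : 0 < C₆ := by rw [hC6_def]; linarith
  have hC5C6 : C₅ ≤ C₆ := by rw [hC6_def]; linarith
  have hκlam : κ * lam ≤ 1 := by nlinarith
  -- F = E·w where w = u - κ (1+t)^lam
  have hFd : ∀ t : ℝ, 0 ≤ t → HasDerivAt
      (fun s => E s * u s - κ * ((1 + s) ^ lam * E s))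
      (E t * (f t + κ) - κ * (E t * (lam * (1 + t) ^ (lam - 1) + (1 + t) ^ (lam - lam)))) t :=
    fun t ht => (hEud t ht).sub ((hkEd lam t ht).const_mul κ)
  have hF0 : E 0 * u 0 - κ * ((1 + 0) ^ lam * E 0) = 0 := by
    simp [hE0, hu0]
  have hFabs : ∀ s : ℝ, 0 ≤ s →
      |E s * (f s + κ) - κ * (E s * (lam * (1 + s) ^ (lam - 1) + (1 + s) ^ (lam - lam)))|
        ≤ C₆ * (E s * (1 + s) ^ (lam - 1)) := by
    intro s hs
    have hy2 : (1 + s) ^ (lam - lam) = 1 := by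
      rw [show lam - lam = (0:ℝ) by ring, Real.rpow_zero]
    rw [hy2, hC6_def]
    have hyp := hy_pos (lam - 1) s hs
    have hEs := hEpos s
    have h1 : E s * f s ≤ E s * (C₅ * (1 + s) ^ (lam - 1)) :=
      mul_le_mul_of_nonneg_left (hf_ub s hs) hEs.le
    have h2 : 0 ≤ E s * f s := mul_nonneg hEs.le (hf_nn s hs)
    have h3 : 0 ≤ E s * (1 + s) ^ (lam - 1) := mul_nonneg hEs.le hyp.le
    have h4 : κ * lam * (E s * (1 + s) ^ (lam - 1)) ≤ 1 * (E s * (1 + s) ^ (lam - 1)) :=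
      mul_le_mul_of_nonneg_right hκlam h3
    have h5 : 0 ≤ κ * lam * (E s * (1 + s) ^ (lam - 1)) :=
      mul_nonneg (mul_nonneg hκpos.le hlam0) h3
    have h6 : 0 ≤ C₅ * (E s * (1 + s) ^ (lam - 1)) := mul_nonneg hC5nn h3
    rw [abs_le]
    constructor
    · nlinarith [h2, h4, h6]
    · nlinarith [h1, h5, h3]
  -- R(t) = θ(t)^m - (1+t)^{1+lam}, R' = m (u - κ(1+t)^lam)
  have hRd : ∀ t : ℝ, 0 ≤ t → HasDerivAt (fun s => θ s ^ m - (1 + s) ^ (1 + lam))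
      (m * (u t - κ * (1 + t) ^ lam)) t := by
    intro t ht
    have h := (hPd t ht).sub (hasDerivAt_one_add_rpow (1 + lam) t ht)
    refine HasDerivAt.congr_deriv h (Eq.symm ?_)
    rw [show (1:ℝ) + lam - 1 = lam by ring]
    linear_combination (-((1 + t) ^ lam)) * hmκ
  have hR0 : θ 0 ^ m - (1 + 0) ^ (1 + lam) = 0 := by
    simp [hP0]
  rcases eq_or_lt_of_le hlam0 with hlam | hlam
  · -- case lam = 0
    subst hlam
    have hEexp : ∀ t : ℝ, E t = Real.exp t := by
      intro t
      rw [hE_def]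
      norm_num
    have hCpos : (0:ℝ) < 2 * m * C₆ := mul_pos (by linarith) hC6pos
    have hG0d : ∀ s : ℝ, 0 ≤ s → HasDerivAt (fun r => 2 * C₆ * ((Real.exp r - 1) / (1 + r)))
        (2 * C₆ * ((s * Real.exp s + 1) / (1 + s) ^ 2)) s := by
      intro s hs
      have h := (((Real.hasDerivAt_exp s).sub_const 1).div ((hasDerivAt_id s).const_add 1)
        (ne_of_gt (h1t s hs))).const_mul (2 * C₆)
      refine HasDerivAt.congr_deriv h (Eq.symm ?_)
      simp only [id]
      have hne := ne_of_gt (h1t s hs)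
      field_simp
      ring
    have hkey0 : ∀ s : ℝ, 0 ≤ s → 0 ≤ 2 + (s - 1) * Real.exp s := by
      intro s hs
      rcases le_or_gt 1 s with h | h
      · nlinarith [Real.exp_pos s]
      · have h2 : 1 - s ≤ Real.exp (-s) := by linarith [Real.add_one_le_exp (-s)]
        have h3 : (1 - s) * Real.exp s ≤ Real.exp (-s) * Real.exp s :=
          mul_le_mul_of_nonneg_right h2 (Real.exp_pos s).le
        rw [← Real.exp_add] at h3
        simp only [neg_add_cancel, Real.exp_zero] at h3
        nlinarith [h3]
    have habs2 : ∀ s : ℝ, 0 ≤ s →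
        |E s * (f s + κ) - κ * (E s * (0 * (1 + s) ^ ((0:ℝ) - 1) + (1 + s) ^ ((0:ℝ) - 0)))|
          ≤ 2 * C₆ * ((s * Real.exp s + 1) / (1 + s) ^ 2) := by
      intro s hs
      refine le_trans (hFabs s hs) ?_
      have e1 : E s * (1 + s) ^ ((0:ℝ) - 1) = Real.exp s / (1 + s) := by
        rw [hEexp s, show (0:ℝ) - 1 = -1 by norm_num, Real.rpow_neg_one, div_eq_mul_inv]
      rw [e1]
      have hk := hkey0 s hs
      have hne := ne_of_gt (h1t s hs)
      have e2 : 2 * C₆ * ((s * Real.exp s + 1) / (1 + s) ^ 2) - C₆ * (Real.exp s / (1 + s))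
          = C₆ * ((2 + (s - 1) * Real.exp s) / (1 + s) ^ 2) := by
        field_simp
        ring
      have e3 : 0 ≤ C₆ * ((2 + (s - 1) * Real.exp s) / (1 + s) ^ 2) := by
        apply mul_nonneg hC6pos.le
        apply div_nonneg hk
        positivity
      linarith
    have hwb : ∀ s : ℝ, 0 ≤ s → |u s - κ * (1 + s) ^ (0:ℝ)| ≤ 2 * C₆ / (1 + s) := by
      intro s hs
      have hEw := abs_comp_aux hFd hG0d habs2 hs
      have hG00 : 2 * C₆ * ((Real.exp 0 - 1) / (1 + 0)) = 0 := by norm_num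
      rw [hF0, hG00, sub_zero, sub_zero] at hEw
      have e : E s * u s - κ * ((1 + s) ^ (0:ℝ) * E s) = E s * (u s - κ * (1 + s) ^ (0:ℝ)) := by
        ring
      rw [e, abs_mul, abs_of_pos (hEpos s), hEexp s] at hEw
      have h2 : 2 * C₆ * ((Real.exp s - 1) / (1 + s)) ≤ Real.exp s * (2 * C₆ / (1 + s)) := by
        have hnum : 2 * C₆ * (Real.exp s - 1) ≤ Real.exp s * (2 * C₆) := by
          nlinarith [hC6pos, Real.exp_pos s]
        calc 2 * C₆ * ((Real.exp s - 1) / (1 + s)) = 2 * C₆ * (Real.exp s - 1) / (1 + s) := by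
              ring
          _ ≤ Real.exp s * (2 * C₆) / (1 + s) := by
              exact (div_le_div_iff_of_pos_right (h1t s hs)).mpr hnum
          _ = Real.exp s * (2 * C₆ / (1 + s)) := by ring
      have h1 : Real.exp s * |u s - κ * (1 + s) ^ (0:ℝ)| ≤ Real.exp s * (2 * C₆ / (1 + s)) :=
        le_trans hEw h2
      exact le_of_mul_le_mul_left h1 (Real.exp_pos s)
    refine ⟨2 * m * C₆, hCpos, fun t ht => ⟨fun _ => ?_, fun hcon => absurd hcon (lt_irrefl 0)⟩⟩
    have hLd : ∀ s : ℝ, 0 ≤ s → HasDerivAt (fun r => 2 * m * C₆ * Real.log (1 + r))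
        (2 * m * C₆ * ((1 + s)⁻¹ * 1)) s := by
      intro s hs
      exact ((Real.hasDerivAt_log (ne_of_gt (h1t s hs))).comp s
        ((hasDerivAt_id s).const_add 1)).const_mul (2 * m * C₆)
    have habs3 : ∀ s : ℝ, 0 ≤ s → |m * (u s - κ * (1 + s) ^ (0:ℝ))|
        ≤ 2 * m * C₆ * ((1 + s)⁻¹ * 1) := by
      intro s hs
      rw [abs_mul, abs_of_pos (by linarith : (0:ℝ) < m)]
      calc m * |u s - κ * (1 + s) ^ (0:ℝ)| ≤ m * (2 * C₆ / (1 + s)) :=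
          mul_le_mul_of_nonneg_left (hwb s hs) (by linarith)
        _ = 2 * m * C₆ * ((1 + s)⁻¹ * 1) := by ring
    have hR := abs_comp_aux hRd hLd habs3 ht
    have hL0 : 2 * m * C₆ * Real.log (1 + 0) = 0 := by norm_num
    rw [hR0, hL0, sub_zero, sub_zero] at hR
    have hQR : Qfun n γ 0 θ t = θ t ^ m - (1 + t) ^ ((1:ℝ) + 0) := by
      simp only [Qfun]
      rw [← hm_def]
      norm_num
    rw [hQR]
    exact hR
  · -- case 0 < lam
    obtain ⟨d, hd_def⟩ : ∃ d : ℝ, d = min (2 * lam) 1 := ⟨_, rfl⟩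
    have hdpos : 0 < d := by rw [hd_def]; exact lt_min (by linarith) one_pos
    have hd1 : d ≤ 1 := by rw [hd_def]; exact min_le_right _ _
    have hd2l : d ≤ 2 * lam := by rw [hd_def]; exact min_le_left _ _
    have hCpos : 0 < m * C₆ / (2 * lam * d) :=
      div_pos (mul_pos (by linarith) hC6pos) (mul_pos (by linarith) hdpos)
    have hGd : ∀ s : ℝ, 0 ≤ s → HasDerivAt (fun r => C₆ / d * ((1 + r) ^ (2 * lam - 1) * E r))
        (C₆ / d * (E s * ((2 * lam - 1) * (1 + s) ^ (2 * lam - 1 - 1)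
          + (1 + s) ^ (2 * lam - 1 - lam)))) s :=
      fun s hs => (hkEd (2 * lam - 1) s hs).const_mul (C₆ / d)
    have habs2 : ∀ s : ℝ, 0 ≤ s →
        |E s * (f s + κ) - κ * (E s * (lam * (1 + s) ^ (lam - 1) + (1 + s) ^ (lam - lam)))|
          ≤ C₆ / d * (E s * ((2 * lam - 1) * (1 + s) ^ (2 * lam - 1 - 1)
            + (1 + s) ^ (2 * lam - 1 - lam))) := by
      intro s hs
      refine le_trans (hFabs s hs) ?_
      rw [show 2 * lam - 1 - 1 = (lam - 1) + (lam - 1) by ring,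
        show 2 * lam - 1 - lam = lam - 1 by ring,
        Real.rpow_add (h1t s hs)]
      have hy := hy_pos (lam - 1) s hs
      have hy1 := hy_le_one (lam - 1) (by linarith) s hs
      have hEs := hEpos s
      have key : d * (1 + s) ^ (lam - 1) ≤ (2 * lam - 1) * ((1 + s) ^ (lam - 1)
          * (1 + s) ^ (lam - 1)) + (1 + s) ^ (lam - 1) := by
        rcases le_or_gt 0 (2 * lam - 1) with h | h
        · have h1 : d * (1 + s) ^ (lam - 1) ≤ 1 * (1 + s) ^ (lam - 1) :=
            mul_le_mul_of_nonneg_right hd1 hy.le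
          nlinarith [mul_nonneg h (mul_nonneg hy.le hy.le), h1]
        · have hsq : (1 + s) ^ (lam - 1) * (1 + s) ^ (lam - 1) ≤ (1 + s) ^ (lam - 1) := by
            nlinarith [hy, hy1]
          have hneg : (2 * lam - 1) * (1 + s) ^ (lam - 1)
              ≤ (2 * lam - 1) * ((1 + s) ^ (lam - 1) * (1 + s) ^ (lam - 1)) :=
            mul_le_mul_of_nonpos_left hsq h.le
          have h1 : d * (1 + s) ^ (lam - 1) ≤ 2 * lam * (1 + s) ^ (lam - 1) :=
            mul_le_mul_of_nonneg_right hd2l hy.le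
          nlinarith [hneg, h1]
      have h2 : C₆ * (E s * (1 + s) ^ (lam - 1)) = C₆ / d * (E s * (d * (1 + s) ^ (lam - 1))) := by
        field_simp
      rw [h2]
      apply mul_le_mul_of_nonneg_left _ (div_nonneg hC6pos.le hdpos.le)
      exact mul_le_mul_of_nonneg_left key hEs.le
    have hwb : ∀ s : ℝ, 0 ≤ s → |u s - κ * (1 + s) ^ lam|
        ≤ C₆ / d * (1 + s) ^ (2 * lam - 1) := by
      intro s hs
      have hEw := abs_comp_aux hFd hGd habs2 hs
      have hG0v : C₆ / d * ((1 + 0:ℝ) ^ (2 * lam - 1) * E 0) = C₆ / d := by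
        rw [hE0]
        norm_num
      rw [hF0, hG0v, sub_zero] at hEw
      have e : E s * u s - κ * ((1 + s) ^ lam * E s) = E s * (u s - κ * (1 + s) ^ lam) := by
        ring
      rw [e, abs_mul, abs_of_pos (hEpos s)] at hEw
      have hdC : 0 ≤ C₆ / d := div_nonneg hC6pos.le hdpos.le
      have h1 : E s * |u s - κ * (1 + s) ^ lam|
          ≤ E s * (C₆ / d * (1 + s) ^ (2 * lam - 1)) := by
        nlinarith [hEw, hdC]
      exact le_of_mul_le_mul_left h1 (hEpos s)
    refine ⟨m * C₆ / (2 * lam * d), hCpos,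
      fun t ht => ⟨fun hcon => absurd hcon (ne_of_gt hlam), fun _ => ?_⟩⟩
    have hΨd : ∀ s : ℝ, 0 ≤ s →
        HasDerivAt (fun r => m * C₆ / (2 * lam * d) * (1 + r) ^ (2 * lam))
        (m * C₆ / (2 * lam * d) * (2 * lam * (1 + s) ^ (2 * lam - 1))) s :=
      fun s hs => (hasDerivAt_one_add_rpow (2 * lam) s hs).const_mul _
    have habs3 : ∀ s : ℝ, 0 ≤ s → |m * (u s - κ * (1 + s) ^ lam)|
        ≤ m * C₆ / (2 * lam * d) * (2 * lam * (1 + s) ^ (2 * lam - 1)) := by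
      intro s hs
      rw [abs_mul, abs_of_pos (by linarith : (0:ℝ) < m)]
      have e : m * C₆ / (2 * lam * d) * (2 * lam * (1 + s) ^ (2 * lam - 1))
          = m * (C₆ / d * (1 + s) ^ (2 * lam - 1)) := by
        field_simp
      rw [e]
      exact mul_le_mul_of_nonneg_left (hwb s hs) (by linarith)
    have hR := abs_comp_aux hRd hΨd habs3 ht
    rw [hR0, sub_zero] at hR
    have hΨ0nn : 0 ≤ m * C₆ / (2 * lam * d) * (1 + 0:ℝ) ^ (2 * lam) :=
      mul_nonneg hCpos.le (hy_pos _ 0 le_rfl).le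
    have hRt : |θ t ^ m - (1 + t) ^ (1 + lam)|
        ≤ m * C₆ / (2 * lam * d) * (1 + t) ^ (2 * lam) := by
      linarith [hR, hΨ0nn]
    have hQR : Qfun n γ lam θ t = (1 + t) ^ (-lam) * (θ t ^ m - (1 + t) ^ (1 + lam)) := by
      simp only [Qfun]
      rw [← hm_def, mul_sub]
      congr 1
      rw [← Real.rpow_add (h1t t ht), show -lam + (1 + lam) = (1:ℝ) by ring, Real.rpow_one]
    rw [hQR, abs_mul, abs_of_pos (hy_pos (-lam) t ht)]
    calc (1 + t) ^ (-lam) * |θ t ^ m - (1 + t) ^ (1 + lam)|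
        ≤ (1 + t) ^ (-lam) * (m * C₆ / (2 * lam * d) * (1 + t) ^ (2 * lam)) :=
          mul_le_mul_of_nonneg_left hRt (hy_pos (-lam) t ht).le
      _ = m * C₆ / (2 * lam * d) * ((1 + t) ^ (-lam) * (1 + t) ^ (2 * lam)) := by ring
      _ = m * C₆ / (2 * lam * d) * (1 + t) ^ lam := by
          rw [← Real.rpow_add (h1t t ht), show -lam + 2 * lam = lam by ring]
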